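/- Let θ ∈ ℝ, η > 0, and g ∈ ℝ be real numbers with −1 ≤ 2·η·g ≤ 0, and set θ' := θ + η·g. If σ(θ') ≤ 1/2, then σ(θ') − σ(θ) ≤ (η/2)·g·σ(θ). -/
import Mathlib


/-- Two-action softmax probability with antisymmetric logits `(θ, -θ)`. -/
noncomputable def twoActionSoftmax (θ : ℝ) : ℝ :=
  Real.exp θ / (Real.exp θ + Real.exp (-θ))

lemma twoActionSoftmax_eq (θ : ℝ) :
    twoActionSoftmax θ = Real.exp (2 * θ) / (Real.exp (2 * θ) + 1) := by
  unfold twoActionSoftmax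
  rw [show (2 : ℝ) * θ = θ + θ by ring, Real.exp_add]
  have h1 := Real.exp_pos θ
  have h2 := Real.exp_pos (-θ)
  have h3 : Real.exp θ * Real.exp (-θ) = 1 := by
    rw [← Real.exp_add]; simp
  field_simp
  nlinarith [h1, h2, h3]

/-- **One-step softmax change, small nonpositive gradient:** for `η > 0`,
`-1 ≤ 2 η g ≤ 0` and `θ' = θ + η g`, if `σ(θ') ≤ 1/2` then
`σ(θ') − σ(θ) ≤ (η/2) g σ(θ)`. -/
theorem twoActionSoftmax_step_upper_bound_of_nonpos
    (θ η g : ℝ) (hη : 0 < η) (hg₁ : -1 ≤ 2 * η * g) (hg₂ : 2 * η * g ≤ 0)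
    (hhalf : twoActionSoftmax (θ + η * g) ≤ 1 / 2) :
    twoActionSoftmax (θ + η * g) - twoActionSoftmax θ ≤
      η / 2 * g * twoActionSoftmax θ := by
  have hx₁ : -1 ≤ 2 * η * g := hg₁
  have hx₂ : 2 * η * g ≤ 0 := hg₂
  set x : ℝ := 2 * η * g with hx
  set A : ℝ := Real.exp (2 * θ) with hA
  set B : ℝ := Real.exp x with hB
  have hA0 : 0 < A := Real.exp_pos _
  have hB0 : 0 < B := Real.exp_pos _
  have hAB : Real.exp (2 * (θ + η * g)) = A * B := by
    rw [hA, hB, ← Real.exp_add, hx]; ring_nf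
  rw [twoActionSoftmax_eq, hAB] at hhalf
  rw [twoActionSoftmax_eq, twoActionSoftmax_eq, hAB]
  -- AB ≤ 1 from hhalf
  have hAB1 : A * B ≤ 1 := by
    have hpos : 0 < A * B + 1 := by positivity
    rw [div_le_div_iff₀ hpos (by norm_num)] at hhalf
    linarith
  -- B ≤ 1 + x/2
  have hBle : B ≤ 1 + x / 2 := by
    have h1 : 1 - x ≤ Real.exp (-x) := by
      have := Real.add_one_le_exp (-x); linarith
    have h2 : 0 < 1 - x := by linarith
    have h3 : B * (1 - x) ≤ B * Real.exp (-x) :=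
      mul_le_mul_of_nonneg_left h1 hB0.le
    have h4 : B * Real.exp (-x) = 1 := by
      rw [hB, ← Real.exp_add]; simp
    nlinarith
  have key : 4 * (B - 1) ≤ x * (A * B + 1) := by
    nlinarith [mul_nonneg (neg_nonneg.2 hx₂) (sub_nonneg.2 hAB1)]
  have hrhs : η / 2 * g * (A / (A + 1)) = x * A / (4 * (A + 1)) := by
    rw [hx]; field_simp; ring
  rw [hrhs, div_sub_div _ _ (by positivity : (A * B + 1 : ℝ) ≠ 0)
      (by positivity : (A + 1 : ℝ) ≠ 0),
    div_le_div_iff₀ (by positivity) (by positivity)]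
  have hmul := mul_le_mul_of_nonneg_left key
    (mul_pos hA0 (by positivity : (0:ℝ) < A + 1)).le
  nlinarith [hmul]
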